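/- Let V be a complex vector space with quadratic form f, Cl(V,f) its Clifford algebra with canonical map ι, and v ∈ V with f(v) = 1. Let v^⊥ = { u ∈ V : f(v+u) − f(v) − f(u) = 0 } and let E denote the even part Cl(v^⊥,f)_0̄, i.e. the ℂ-linear span of 1 together with all products ι(u₁)⋯ι(u_{2k}) of evenly many elements u_j ∈ v^⊥. Then the centralizer C(ι(v)) = { a ∈ Cl(V,f) : ι(v)·a = a·ι(v) } equals E + ι(v)·E (as a ℂ-subspace of Cl(V,f)). -/

import Mathlib

/-- The even part `Cl(U,f)ō` of the Clifford subalgebra generated by a subset `U ⊆ V`: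
the `ℂ`-linear span of `1` together with all products of evenly many elements `ι(u)`,
`u ∈ U`. -/
def evenCliffordPart {V : Type*} [AddCommGroup V] [Module ℂ V] (f : QuadraticForm ℂ V)
    (U : Set V) : Submodule ℂ (CliffordAlgebra f) :=
  Submodule.span ℂ {x | ∃ (k : ℕ) (u : Fin (2 * k) → V), (∀ j, u j ∈ U) ∧
    x = ((List.finRange (2 * k)).map fun j => CliffordAlgebra.ι f (u j)).prod}

namespace Stmt15

open CliffordAlgebra

variable {V : Type*} [AddCommGroup V] [Module ℂ V] (f : QuadraticForm ℂ V)

/-- A list-based description of the even part. -/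
def evenL (U : Set V) : Submodule ℂ (CliffordAlgebra f) :=
  Submodule.span ℂ {x | ∃ l : List V, (∀ u ∈ l, u ∈ U) ∧ Even l.length ∧
    x = (l.map (ι f)).prod}

/-- The odd part, list-based. -/
def oddL (U : Set V) : Submodule ℂ (CliffordAlgebra f) :=
  Submodule.span ℂ {x | ∃ l : List V, (∀ u ∈ l, u ∈ U) ∧ Odd l.length ∧
    x = (l.map (ι f)).prod}

lemma ofFn_get_cast {α β : Type*} (g : α → β) (l : List α) {n : ℕ} (h : n = l.length) :
    List.ofFn (fun j : Fin n => g (l.get (Fin.cast h j))) = l.map g := by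
  subst h
  rw [show (fun j : Fin l.length => g (l.get (Fin.cast rfl j))) = g ∘ l.get from rfl,
    ← List.map_ofFn, List.ofFn_get]

lemma evenCliffordPart_eq (U : Set V) : evenCliffordPart f U = evenL f U := by
  unfold evenCliffordPart evenL
  congr 1
  ext y
  constructor
  · rintro ⟨k, u, hu, rfl⟩
    refine ⟨List.ofFn u, ?_, ?_, ?_⟩
    · intro a ha
      rcases List.mem_ofFn.1 ha with ⟨j, rfl⟩
      exact hu j
    · simp only [List.length_ofFn]
      exact even_two_mul k
    · rw [List.map_ofFn, List.ofFn_eq_map]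
      rfl
  · rintro ⟨l, hl, ⟨r, hr⟩, rfl⟩
    have h2 : 2 * r = l.length := by omega
    refine ⟨r, fun j => l.get (Fin.cast h2 j), fun j => hl _ (l.get_mem _), ?_⟩
    rw [← List.ofFn_eq_map, ofFn_get_cast (⇑(ι f)) l h2]

variable (v : V) (U : Set V)

/-- Generators of the Clifford algebra adapted to the decomposition. -/
def gen : Set (CliffordAlgebra f) :=
  {y | ∃ (ε : Bool) (l : List V), (∀ u ∈ l, u ∈ U) ∧
    y = (cond ε (ι f v) 1) * (l.map (ι f)).prod}

variable {v U}

lemma anti (hU : ∀ u ∈ U, QuadraticMap.polar f v u = 0) {u : V} (hu : u ∈ U) :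
    ι f v * ι f u = -(ι f u * ι f v) := by
  have h := ι_mul_ι_add_swap (Q := f) v u
  rw [hU u hu, map_zero] at h
  exact eq_neg_of_add_eq_zero_left h

lemma comm_list (hU : ∀ u ∈ U, QuadraticMap.polar f v u = 0) :
    ∀ l : List V, (∀ u ∈ l, u ∈ U) →
      ι f v * (l.map (ι f)).prod = ((-1 : ℂ) ^ l.length) • ((l.map (ι f)).prod * ι f v) := by
  intro l hl
  induction l with
  | nil => simp
  | cons a l ih =>
    have ha := anti f hU (hl a List.mem_cons_self)
    have ih' := ih fun u hu => hl u (List.mem_cons_of_mem a hu)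
    simp only [List.map_cons, List.prod_cons, List.length_cons, pow_succ]
    calc ι f v * (ι f a * (l.map (ι f)).prod)
        = (ι f v * ι f a) * (l.map (ι f)).prod := by rw [mul_assoc]
      _ = -(ι f a * (ι f v * (l.map (ι f)).prod)) := by rw [ha]; rw [neg_mul, mul_assoc]
      _ = -(ι f a * ((-1 : ℂ) ^ l.length • ((l.map (ι f)).prod * ι f v))) := by rw [ih']
      _ = ((-1 : ℂ) ^ l.length * -1) • (ι f a * (l.map (ι f)).prod * ι f v) := by
          rw [mul_smul_comm, mul_neg_one, neg_smul, mul_assoc]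

lemma comm_list' (hU : ∀ u ∈ U, QuadraticMap.polar f v u = 0)
    (l : List V) (hl : ∀ u ∈ l, u ∈ U) :
    (l.map (ι f)).prod * ι f v = ((-1 : ℂ) ^ l.length) • (ι f v * (l.map (ι f)).prod) := by
  rw [comm_list f hU l hl, smul_smul, ← pow_add,
    Even.neg_one_pow ⟨l.length, rfl⟩, one_smul]

lemma mul_mem_span_gen (hU : ∀ u ∈ U, QuadraticMap.polar f v u = 0) (hv : f v = 1)
    {y1 y2 : CliffordAlgebra f} (h1 : y1 ∈ gen f v U) (h2 : y2 ∈ gen f v U) :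
    y1 * y2 ∈ Submodule.span ℂ (gen f v U) := by
  obtain ⟨ε1, l1, hl1, rfl⟩ := h1
  obtain ⟨ε2, l2, hl2, rfl⟩ := h2
  have hxx : ι f v * ι f v = 1 := by rw [ι_sq_scalar, hv, map_one]
  have hl12 : ∀ u ∈ l1 ++ l2, u ∈ U := by
    intro u hu
    rcases List.mem_append.1 hu with h | h
    · exact hl1 u h
    · exact hl2 u h
  have hprod : (l1.map (ι f)).prod * (l2.map (ι f)).prod = ((l1 ++ l2).map (ι f)).prod := by
    rw [List.map_append, List.prod_append]
  cases ε2 with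
  | false =>
    rw [show (cond false (ι f v) 1 : CliffordAlgebra f) = 1 from rfl, one_mul,
      mul_assoc, hprod]
    exact Submodule.subset_span ⟨ε1, l1 ++ l2, hl12, rfl⟩
  | true =>
    rw [show (cond true (ι f v) 1 : CliffordAlgebra f) = ι f v from rfl]
    have key : (cond ε1 (ι f v) 1 * (l1.map (ι f)).prod) * (ι f v * (l2.map (ι f)).prod)
        = ((-1 : ℂ) ^ l1.length) •
          ((cond ε1 (ι f v) 1 * ι f v) * ((l1 ++ l2).map (ι f)).prod) := by
      calc (cond ε1 (ι f v) 1 * (l1.map (ι f)).prod) * (ι f v * (l2.map (ι f)).prod)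
          = cond ε1 (ι f v) 1 * (((l1.map (ι f)).prod * ι f v) * (l2.map (ι f)).prod) := by
            rw [mul_assoc, mul_assoc]
        _ = cond ε1 (ι f v) 1 * ((((-1 : ℂ) ^ l1.length) •
              (ι f v * (l1.map (ι f)).prod)) * (l2.map (ι f)).prod) := by
            rw [comm_list' f hU l1 hl1]
        _ = ((-1 : ℂ) ^ l1.length) •
              ((cond ε1 (ι f v) 1 * ι f v) * ((l1 ++ l2).map (ι f)).prod) := by
            rw [smul_mul_assoc, mul_smul_comm, ← hprod]
            simp only [mul_assoc]
    rw [key]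
    refine Submodule.smul_mem _ _ ?_
    cases ε1 with
    | false =>
      rw [show (cond false (ι f v) 1 : CliffordAlgebra f) = 1 from rfl, one_mul]
      exact Submodule.subset_span ⟨true, l1 ++ l2, hl12, rfl⟩
    | true =>
      rw [show (cond true (ι f v) 1 : CliffordAlgebra f) = ι f v from rfl, hxx, one_mul]
      have : ((l1 ++ l2).map (ι f)).prod
          = (cond false (ι f v) 1 : CliffordAlgebra f) * ((l1 ++ l2).map (ι f)).prod := by
        rw [show (cond false (ι f v) 1 : CliffordAlgebra f) = 1 from rfl, one_mul]
      rw [this]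
      exact Submodule.subset_span ⟨false, l1 ++ l2, hl12, rfl⟩

lemma span_gen_eq_top (hU : ∀ u ∈ U, QuadraticMap.polar f v u = 0) (hv : f v = 1)
    (hdec : ∀ w : V, ∃ c : ℂ, ∃ u ∈ U, w = c • v + u) :
    Submodule.span ℂ (gen f v U) = ⊤ := by
  have hmul : ∀ a b : CliffordAlgebra f, a ∈ Submodule.span ℂ (gen f v U) →
      b ∈ Submodule.span ℂ (gen f v U) → a * b ∈ Submodule.span ℂ (gen f v U) := by
    intro a b ha hb
    have hab : a * b ∈ Submodule.span ℂ (gen f v U) * Submodule.span ℂ (gen f v U) :=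
      Submodule.mul_mem_mul ha hb
    rw [Submodule.span_mul_span] at hab
    refine Submodule.span_le.2 ?_ hab
    rintro y ⟨y1, hy1, y2, hy2, rfl⟩
    exact mul_mem_span_gen f hU hv hy1 hy2
  rw [eq_top_iff]
  rintro a -
  induction a using CliffordAlgebra.induction with
  | algebraMap r =>
    have h1 : (1 : CliffordAlgebra f) ∈ gen f v U := ⟨false, [], by simp, by simp⟩
    have := Submodule.smul_mem _ r (Submodule.subset_span h1)
    simpa [Algebra.algebraMap_eq_smul_one] using this
  | ι w =>
    obtain ⟨c, u, hu, rfl⟩ := hdec w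
    rw [map_add, map_smul]
    refine Submodule.add_mem _ (Submodule.smul_mem _ _ ?_) ?_
    · exact Submodule.subset_span ⟨true, [], by simp, by simp⟩
    · refine Submodule.subset_span ⟨false, [u], by simpa using hu, by simp⟩
  | mul a b ha hb => exact hmul a b ha hb
  | add a b ha hb => exact Submodule.add_mem _ ha hb

end Stmt15

open Stmt15 CliffordAlgebra in
theorem stmt_15 (V : Type*) [AddCommGroup V] [Module ℂ V] (f : QuadraticForm ℂ V)
    (v : V) (hv : f v = 1) :
    Subalgebra.toSubmodule
        (Subalgebra.centralizer ℂ ({CliffordAlgebra.ι f v} : Set (CliffordAlgebra f))) =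
      evenCliffordPart f {u : V | f (v + u) - f v - f u = 0} ⊔
        Submodule.map (LinearMap.mulLeft ℂ (CliffordAlgebra.ι f v))
          (evenCliffordPart f {u : V | f (v + u) - f v - f u = 0}) := by
  set U : Set V := {u : V | f (v + u) - f v - f u = 0} with hUdef
  have hU : ∀ u ∈ U, QuadraticMap.polar f v u = 0 := fun u hu => hu
  set x : CliffordAlgebra f := CliffordAlgebra.ι f v with hxdef
  have hxx : x * x = 1 := by rw [hxdef, ι_sq_scalar, hv, map_one]
  -- commutation for the even list part
  have hE : Stmt15.evenL f U ≤ Subalgebra.toSubmodule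
      (Subalgebra.centralizer ℂ ({x} : Set (CliffordAlgebra f))) := by
    refine Submodule.span_le.2 ?_
    rintro y ⟨l, hl, he, rfl⟩
    rw [SetLike.mem_coe, Subalgebra.mem_toSubmodule, Subalgebra.mem_centralizer_iff]
    rintro g hg
    rw [Set.mem_singleton_iff] at hg
    subst hg
    rw [comm_list f hU l hl, Even.neg_one_pow he, one_smul]
  have hEcomm : ∀ e ∈ Stmt15.evenL f U, x * e = e * x := by
    intro e he
    have := hE he
    rw [Subalgebra.mem_toSubmodule, Subalgebra.mem_centralizer_iff] at this
    exact this x (Set.mem_singleton _)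
  -- the anticommuting submodule
  let AntiC : Submodule ℂ (CliffordAlgebra f) :=
    { carrier := {y | x * y = -(y * x)}
      add_mem' := by
        intro a b ha hb
        simp only [Set.mem_setOf_eq] at *
        rw [mul_add, add_mul, ha, hb, neg_add]
      zero_mem' := by simp
      smul_mem' := by
        intro c a ha
        simp only [Set.mem_setOf_eq] at *
        rw [mul_smul_comm, smul_mul_assoc, ha, smul_neg] }
  have hO : Stmt15.oddL f U ≤ AntiC := by
    refine Submodule.span_le.2 ?_
    rintro y ⟨l, hl, ho, rfl⟩
    show x * _ = -(_ * x)
    rw [comm_list f hU l hl, Odd.neg_one_pow ho, neg_one_smul]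
  have hOanti : ∀ o ∈ Stmt15.oddL f U, x * o = -(o * x) := fun o ho => hO ho
  -- the two halves
  set Cplus : Submodule ℂ (CliffordAlgebra f) :=
    Stmt15.evenL f U ⊔ Submodule.map (LinearMap.mulLeft ℂ x) (Stmt15.evenL f U) with hCp
  set Cminus : Submodule ℂ (CliffordAlgebra f) :=
    Stmt15.oddL f U ⊔ Submodule.map (LinearMap.mulLeft ℂ x) (Stmt15.oddL f U) with hCm
  have hCplus : ∀ a ∈ Cplus, x * a = a * x := by
    have h1 : Cplus ≤ Subalgebra.toSubmodule
        (Subalgebra.centralizer ℂ ({x} : Set (CliffordAlgebra f))) := by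
      refine sup_le hE ?_
      rintro y ⟨e, he, rfl⟩
      rw [Subalgebra.mem_toSubmodule, Subalgebra.mem_centralizer_iff]
      rintro g hg
      rw [Set.mem_singleton_iff] at hg
      subst hg
      rw [LinearMap.mulLeft_apply, mul_assoc, ← hEcomm e he]
    intro a ha
    have := h1 ha
    rw [Subalgebra.mem_toSubmodule, Subalgebra.mem_centralizer_iff] at this
    exact this x (Set.mem_singleton _)
  have hCminus : ∀ a ∈ Cminus, x * a = -(a * x) := by
    have h1 : Cminus ≤ AntiC := by
      refine sup_le hO ?_
      rintro y ⟨o, ho, rfl⟩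
      show x * _ = -(_ * x)
      rw [LinearMap.mulLeft_apply]
      have hox : o * x = -(x * o) := by rw [hOanti o ho, neg_neg]
      rw [mul_assoc, hox, mul_neg, neg_neg]
    intro a ha
    exact h1 ha
  -- each generator lies in Cplus ⊔ Cminus
  have hgen : Stmt15.gen f v U ⊆ ↑(Cplus ⊔ Cminus) := by
    rintro y ⟨ε, l, hl, rfl⟩
    rcases Nat.even_or_odd l.length with he | ho
    · have hP : (l.map (ι f)).prod ∈ Stmt15.evenL f U :=
        Submodule.subset_span ⟨l, hl, he, rfl⟩
      cases ε with
      | false =>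
        rw [show (cond false (ι f v) 1 : CliffordAlgebra f) = 1 from rfl, one_mul]
        exact Submodule.mem_sup_left (Submodule.mem_sup_left hP)
      | true =>
        rw [show (cond true (ι f v) 1 : CliffordAlgebra f) = x from rfl]
        exact Submodule.mem_sup_left (Submodule.mem_sup_right ⟨_, hP, rfl⟩)
    · have hP : (l.map (ι f)).prod ∈ Stmt15.oddL f U :=
        Submodule.subset_span ⟨l, hl, ho, rfl⟩
      cases ε with
      | false =>
        rw [show (cond false (ι f v) 1 : CliffordAlgebra f) = 1 from rfl, one_mul]
        exact Submodule.mem_sup_right (Submodule.mem_sup_left hP)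
      | true =>
        rw [show (cond true (ι f v) 1 : CliffordAlgebra f) = x from rfl]
        exact Submodule.mem_sup_right (Submodule.mem_sup_right ⟨_, hP, rfl⟩)
  -- decomposition of vectors
  have hdec : ∀ w : V, ∃ c : ℂ, ∃ u ∈ U, w = c • v + u := by
    intro w
    set c : ℂ := QuadraticMap.polar f v w / 2 with hc
    refine ⟨c, w - c • v, ?_, by abel⟩
    show f (v + (w - c • v)) - f v - f (w - c • v) = 0
    have : QuadraticMap.polar f v (w - c • v) = 0 := by
      rw [QuadraticMap.polar_sub_right, QuadraticMap.polar_smul_right,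
        QuadraticMap.polar_self, hv]
      rw [hc]
      simp [smul_eq_mul]
    exact this
  have htop : (⊤ : Submodule ℂ (CliffordAlgebra f)) ≤ Cplus ⊔ Cminus := by
    rw [← span_gen_eq_top f hU hv hdec]
    exact Submodule.span_le.2 hgen
  rw [evenCliffordPart_eq]
  apply le_antisymm
  · intro a ha
    rw [Subalgebra.mem_toSubmodule, Subalgebra.mem_centralizer_iff] at ha
    have hax : x * a = a * x := ha x (Set.mem_singleton _)
    obtain ⟨c, hc, d, hd, rfl⟩ := Submodule.mem_sup.1 (htop (Submodule.mem_top (x := a)))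
    have h1 : x * c = c * x := hCplus c hc
    have h2 : x * d = -(d * x) := hCminus d hd
    have hxd : x * d = d * x := by
      have h3 : x * c + x * d = c * x + d * x := by
        rw [← mul_add, ← add_mul]; exact hax
      rw [h1] at h3
      exact add_left_cancel h3
    have h4 : x * d = -(x * d) := h2.trans (by rw [hxd])
    have h5 : (2 : ℂ) • (x * d) = 0 := by
      rw [two_smul]
      nth_rewrite 2 [h4]
      exact add_neg_cancel _
    have hd0 : x * d = 0 := by
      rcases smul_eq_zero.mp h5 with h | h
      · exact absurd h two_ne_zero
      · exact h
    have hd00 : d = 0 := by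
      have hxxd : x * (x * d) = d := by rw [← mul_assoc, hxx, one_mul]
      rw [hd0, mul_zero] at hxxd
      exact hxxd.symm
    rw [hd00, add_zero]
    exact hc
  · exact sup_le (hE.trans (le_of_eq rfl)) (by
      rintro y ⟨e, he, rfl⟩
      have h1 : Cplus ≤ Subalgebra.toSubmodule
          (Subalgebra.centralizer ℂ ({x} : Set (CliffordAlgebra f))) := by
        refine sup_le hE ?_
        rintro z ⟨e', he', rfl⟩
        rw [Subalgebra.mem_toSubmodule, Subalgebra.mem_centralizer_iff]
        rintro g hg
        rw [Set.mem_singleton_iff] at hg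
        subst hg
        rw [LinearMap.mulLeft_apply, mul_assoc, ← hEcomm e' he']
      exact h1 (Submodule.mem_sup_right (⟨e, he, rfl⟩ : _ ∈ Submodule.map (LinearMap.mulLeft ℂ x) (Stmt15.evenL f U))))
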